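/- Let G be an abelian l-group, u > 0, and A ⊆ [0,u] a subset closed under 0, the operation a ⊕ b = u ⊓ (a+b), and ¬a = u - a (i.e., a sub-MV-algebra of the segment). Let A* be the subgroup of G generated by A. Then A* ∩ [0,u] = A; that is, every element x of A* with 0 ≤ x ≤ u lies in A. -/

import Mathlib

section Aux

variable {G : Type*} [Lattice G] [AddCommGroup G]
    [CovariantClass G G (· + ·) (· ≤ ·)] (u : G)

private lemma inf_add_inf (a s : G) (ha : 0 ≤ a) :
    u ⊓ (a + u ⊓ s) = u ⊓ (a + s) := by
  rw [add_inf u s a, ← inf_assoc]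
  have : u ⊓ (a + u) = u := inf_eq_left.2 (le_add_of_nonneg_left ha)
  rw [this]

variable {u} (hu : 0 < u)
    {A : Set G} (hA : A ⊆ Set.Icc (0 : G) u)
    (h0 : (0 : G) ∈ A) (h1 : u ∈ A)
    (hoplus : ∀ a ∈ A, ∀ b ∈ A, u ⊓ (a + b) ∈ A)
    (hneg : ∀ a ∈ A, u - a ∈ A)

include hu hA h0 hoplus in
private lemma inf_sum_mem : ∀ l : List G, (∀ a ∈ l, a ∈ A) → u ⊓ l.sum ∈ A := by
  intro l hl
  induction l with
  | nil =>
      simpa [inf_eq_right.2 hu.le] using h0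
  | cons a t ih =>
      have ha : a ∈ A := hl a List.mem_cons_self
      have ht : ∀ x ∈ t, x ∈ A := fun x hx => hl x (List.mem_cons_of_mem a hx)
      have hinf : u ⊓ t.sum ∈ A := ih ht
      have := hoplus a ha (u ⊓ t.sum) hinf
      rwa [inf_add_inf u a t.sum (hA ha).1, ← List.sum_cons] at this

include hoplus hneg in
/-- `a ⊙ b = 0 ⊔ (a + b - u)` is in `A`. -/
private lemma odot_mem {a b : G} (ha : a ∈ A) (hb : b ∈ A) :
    (a + b) - u ⊓ (a + b) ∈ A := by
  have key : (a + b) - u ⊓ (a + b) = u - u ⊓ ((u - a) + (u - b)) := by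
    rw [sub_inf, sub_inf, sub_self, sub_self, sup_comm]
    congr 1
    abel
  rw [key]
  exact hneg _ (hoplus _ (hneg a ha) _ (hneg b hb))

include hu hA h0 h1 hoplus hneg in
/-- There is a list of elements of `A` whose sum is `l.sum - u ⊓ l.sum`. -/
private lemma residue_list : ∀ l : List G, (∀ a ∈ l, a ∈ A) →
    ∃ l' : List G, (∀ a ∈ l', a ∈ A) ∧ l'.sum = l.sum - u ⊓ l.sum := by
  intro l hl
  induction l with
  | nil =>
      refine ⟨[], by simp, ?_⟩
      simp [inf_eq_right.2 hu.le]
  | cons a t ih =>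
      have ha : a ∈ A := hl a List.mem_cons_self
      have ht : ∀ x ∈ t, x ∈ A := fun x hx => hl x (List.mem_cons_of_mem a hx)
      obtain ⟨l', hl', hsum⟩ := ih ht
      set b : G := u ⊓ t.sum with hb
      have hbA : b ∈ A := inf_sum_mem hu hA h0 hoplus t ht
      refine ⟨((a + b) - u ⊓ (a + b)) :: l', ?_, ?_⟩
      · intro x hx
        rcases List.mem_cons.1 hx with h | h
        · rw [h]; exact odot_mem hoplus hneg ha hbA
        · exact hl' x h
      · rw [List.sum_cons, hsum, List.sum_cons,
          inf_add_inf u a t.sum (hA ha).1]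
        abel

private lemma map_sub_sum :
    ∀ l : List G, (l.map (fun a => u - a)).sum = l.length • u - l.sum := by
  intro l
  induction l with
  | nil => simp
  | cons b t iht =>
      simp only [List.map_cons, List.sum_cons, List.length_cons, iht, succ_nsmul]
      abel

include hu hA h0 h1 hoplus hneg in
private lemma main_lemma : ∀ m : ℕ, ∀ l : List G, (∀ a ∈ l, a ∈ A) →
    ∀ x : G, 0 ≤ x → x ≤ u → x + m • u = l.sum → x ∈ A := by
  intro m
  induction m with
  | zero =>
      intro l hl x hx0 hxu hsum
      have : x = u ⊓ l.sum := by
        rw [← hsum]; simp only [zero_nsmul, add_zero]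
        exact (inf_eq_right.2 hxu).symm
      rw [this]
      exact inf_sum_mem hu hA h0 hoplus l hl
  | succ m ih =>
      intro l hl x hx0 hxu hsum
      have hsu : u ≤ l.sum := by
        rw [← hsum, succ_nsmul]
        calc u ≤ m • u + u := le_add_of_nonneg_left (nsmul_nonneg hu.le m)
          _ ≤ x + (m • u + u) := le_add_of_nonneg_left hx0
      obtain ⟨l', hl', hsum'⟩ := residue_list hu hA h0 h1 hoplus hneg l hl
      refine ih l' hl' x hx0 hxu ?_
      rw [hsum', inf_eq_left.2 hsu, ← hsum, succ_nsmul]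
      abel

end Aux

/-- If `A` is a sub-MV-algebra of the segment `[0,u]` of an abelian l-group `G`
and `A*` is the subgroup generated by `A`, then `A* ∩ [0,u] = A`. -/
theorem subMV_closure_inter_segment {G : Type*} [Lattice G] [AddCommGroup G]
    [CovariantClass G G (· + ·) (· ≤ ·)] (u : G) (hu : 0 < u)
    (A : Set G) (hA : A ⊆ Set.Icc (0 : G) u)
    (h0 : (0 : G) ∈ A) (h1 : u ∈ A)
    (hoplus : ∀ a ∈ A, ∀ b ∈ A, u ⊓ (a + b) ∈ A)
    (hneg : ∀ a ∈ A, u - a ∈ A) :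
    (AddSubgroup.closure A : Set G) ∩ Set.Icc (0 : G) u = A := by
  apply Set.Subset.antisymm
  · rintro x ⟨hxc, hx0, hxu⟩
    -- every element of the closure can be written as `l.sum - m • u`
    have hrep : ∃ m : ℕ, ∃ l : List G, (∀ a ∈ l, a ∈ A) ∧ x + m • u = l.sum := by
      refine AddSubgroup.closure_induction
        (p := fun y _ => ∃ m : ℕ, ∃ l : List G, (∀ a ∈ l, a ∈ A) ∧ y + m • u = l.sum)
        ?_ ?_ ?_ ?_ hxc
      · intro y hy
        exact ⟨0, [y], by simpa using hy, by simp⟩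
      · exact ⟨0, [], by simp, by simp⟩
      · rintro y z _ _ ⟨m₁, l₁, hl₁, hs₁⟩ ⟨m₂, l₂, hl₂, hs₂⟩
        refine ⟨m₁ + m₂, l₁ ++ l₂, ?_, ?_⟩
        · intro a ha
          rcases List.mem_append.1 ha with h | h
          exacts [hl₁ a h, hl₂ a h]
        · rw [List.sum_append, ← hs₁, ← hs₂, add_nsmul]
          abel
      · rintro y _ ⟨m, l, hl, hs⟩
        refine ⟨l.length, l.map (fun a => u - a) ++ List.replicate m u, ?_, ?_⟩
        · intro a ha
          rcases List.mem_append.1 ha with h | h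
          · obtain ⟨b, hb, rfl⟩ := List.mem_map.1 h
            exact hneg b (hl b hb)
          · rw [List.eq_of_mem_replicate h]; exact h1
        · rw [List.sum_append, List.sum_replicate]
          rw [map_sub_sum, ← hs]
          abel
    obtain ⟨m, l, hl, hs⟩ := hrep
    exact main_lemma hu hA h0 h1 hoplus hneg m l hl x hx0 hxu hs
  · intro a ha
    exact ⟨AddSubgroup.subset_closure ha, hA ha⟩
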